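/- There exist strings of every even length n on which the Jumping Algorithm performs Θ(n) iterations: for s = (ab)^{n/2} and q = (2,0), the algorithm executes n/2 jumps; equivalently, the query Parikh vector (2,0) does not occur in (ab)^{n/2}, and firstfit(prv(2i) + (2,0)) - 2i = 3 for all i with 2i+3 ≤ n, forcing each L-update to advance L by exactly 2. -/

import Mathlib

private def ab (k : ℕ) : List Bool := (List.replicate k [true, false]).flatten

private lemma ab_succ (k : ℕ) : ab (k+1) = true :: false :: ab k := by
  simp [ab, List.replicate_succ]

private lemma ab_length (k : ℕ) : (ab k).length = 2 * k := by
  induction k with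
  | zero => simp [ab]
  | succ n ih => rw [ab_succ]; simp [ih]; omega

private lemma ab_count_true (k : ℕ) : (ab k).count true = k := by
  induction k with
  | zero => simp [ab]
  | succ n ih => rw [ab_succ]; simp [ih]

private lemma ab_count_false (k : ℕ) : (ab k).count false = k := by
  induction k with
  | zero => simp [ab]
  | succ n ih => rw [ab_succ]; simp [ih]

private lemma ab_add (m n : ℕ) : ab (m + n) = ab m ++ ab n := by
  induction m with
  | zero => simp [ab]
  | succ p ih =>
    have : p + 1 + n = (p + n) + 1 := by omega
    rw [this, ab_succ, ab_succ, ih]; rfl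

private lemma ab_take_even {m k : ℕ} (h : m ≤ k) : (ab k).take (2 * m) = ab m := by
  obtain ⟨n, rfl⟩ := Nat.exists_eq_add_of_le h
  rw [ab_add, List.take_append_of_le_length (by rw [ab_length]),
    List.take_of_length_le (by rw [ab_length])]

private lemma ab_take_odd {m k : ℕ} (h : m < k) :
    (ab k).take (2 * m + 1) = ab m ++ [true] := by
  obtain ⟨n, rfl⟩ : ∃ n, k = m + (n + 1) := ⟨k - m - 1, by omega⟩
  rw [ab_add, List.take_append, List.take_of_length_le (by rw [ab_length]; omega),
    ab_length, ab_succ]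
  congr 1
  have : 2 * m + 1 - 2 * m = 1 := by omega
  rw [this]; rfl

private lemma ab_take_count_true {j k : ℕ} (h : j ≤ 2 * k) :
    ((ab k).take j).count true = (j + 1) / 2 := by
  rcases Nat.even_or_odd j with ⟨m, hm⟩ | ⟨m, hm⟩
  · subst hm
    rw [show m + m = 2 * m by ring, ab_take_even (by omega), ab_count_true]
    omega
  · subst hm
    rw [ab_take_odd (by omega)]
    simp [ab_count_true]
    omega

private lemma ab_take_count_false {j k : ℕ} (h : j ≤ 2 * k) :
    ((ab k).take j).count false = j / 2 := by
  rcases Nat.even_or_odd j with ⟨m, hm⟩ | ⟨m, hm⟩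
  · subst hm
    rw [show m + m = 2 * m by ring, ab_take_even (by omega), ab_count_false]
    omega
  · subst hm
    rw [ab_take_odd (by omega)]
    simp [ab_count_false]
    omega

/-- On `s = (ab)^k` (with `a` = `true`, `b` = `false`) and `q = (2,0)`:
the Parikh vector `(2,0)` does not occur in `s` (no window of length 2 consists of two
`a`'s); `prv(2i) = (i, i)`; and `firstfit(prv(2i) + (2,0)) - 2i = 3` whenever
`2i + 3 ≤ 2k`, so each jump advances `L` by exactly `2` and the algorithm performs
`Θ(n)` iterations. -/
theorem stmt16 (k : ℕ) :
    (¬ ∃ i, i + 2 ≤ ((List.replicate k [true, false]).flatten).length ∧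
        ((((List.replicate k [true, false]).flatten).drop i).take 2).count true = 2) ∧
    (∀ i, 2 * i ≤ 2 * k →
      (((List.replicate k [true, false]).flatten).take (2 * i)).count true = i ∧
      (((List.replicate k [true, false]).flatten).take (2 * i)).count false = i) ∧
    (∀ i, 2 * i + 3 ≤ 2 * k →
      sInf {j | i + 2 ≤ (((List.replicate k [true, false]).flatten).take j).count true ∧
        i ≤ (((List.replicate k [true, false]).flatten).take j).count false}
        - 2 * i = 3) := by
  have hS : (List.replicate k [true, false]).flatten = ab k := rfl
  rw [hS]
  refine ⟨?_, ?_, ?_⟩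
  · rintro ⟨i, hi, hcount⟩
    rw [ab_length] at hi
    have h1 : (ab k).take (i + 2) = (ab k).take i ++ ((ab k).drop i).take 2 :=
      List.take_add
    have h2 := ab_take_count_true (k := k) (j := i + 2) (by omega)
    have h3 := ab_take_count_true (k := k) (j := i) (by omega)
    rw [h1, List.count_append, h3, hcount] at h2
    omega
  · intro i hi
    rw [ab_take_even (by omega), ab_count_true, ab_count_false]
    exact ⟨rfl, rfl⟩
  · intro i hi
    set T : Set ℕ := {j | i + 2 ≤ ((ab k).take j).count true ∧
        i ≤ ((ab k).take j).count false} with hT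
    have hmem : 2 * i + 3 ∈ T := by
      constructor
      · rw [ab_take_count_true (by omega)]; omega
      · rw [ab_take_count_false (by omega)]; omega
    have hlb : ∀ j ∈ T, 2 * i + 3 ≤ j := by
      rintro j ⟨hj1, _⟩
      by_cases hjk : j ≤ 2 * k
      · rw [ab_take_count_true hjk] at hj1; omega
      · rw [List.take_of_length_le (by rw [ab_length]; omega), ab_count_true] at hj1
        omega
    have : sInf T = 2 * i + 3 :=
      le_antisymm (Nat.sInf_le hmem) (hlb _ (Nat.sInf_mem ⟨_, hmem⟩))
    rw [this]
    omega
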